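/- arXiv:2203.14163 — 2 statements merged into one kernel-verified Lean document; each statement's English description precedes it below -/
import Mathlib

section
/- Let n ≥ 3 and m ≥ 1 be integers and let λ > 0 be a real number. Suppose ψ : ℝⁿ → ℝᵐ is a C² map that is ℤⁿ-periodic (that is, ψ(x + k) = ψ(x) for every x ∈ ℝⁿ and every k ∈ ℤⁿ) and satisfies the Einstein–Dirac-type equation −Δψ(x) + (λ/(4(n−2)))‖ψ(x)‖² ψ(x) = λ² ψ(x) for every x ∈ ℝⁿ, where Δ acts componentwise. Then ‖ψ(x)‖² ≤ 4(n−2)λ for every x ∈ ℝⁿ. -/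
/-- The componentwise Euclidean Laplacian `Δψ(x) = ∑ i ∂²ψ/∂xᵢ²(x)`. -/
noncomputable def euclideanLaplacian {n : ℕ} {F : Type*} [NormedAddCommGroup F]
    [NormedSpace ℝ F] (ψ : EuclideanSpace ℝ (Fin n) → F) (x : EuclideanSpace ℝ (Fin n)) : F :=
  ∑ i : Fin n,
    fderiv ℝ (fun y => fderiv ℝ ψ y (EuclideanSpace.single i 1)) x (EuclideanSpace.single i 1)

open scoped RealInnerProductSpace

/-- Second derivative test at a global max. -/
lemma second_deriv_nonpos_of_max (g : ℝ → ℝ) (c : ℝ)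
    (hg : Differentiable ℝ g)
    (hc : HasDerivAt (deriv g) c 0)
    (hmax : ∀ t, g t ≤ g 0) : c ≤ 0 := by
  by_contra h
  push_neg at h
  have hloc : IsLocalMax g 0 := Filter.Eventually.of_forall hmax
  have h0 : deriv g 0 = 0 := hloc.deriv_eq_zero
  have hslope : Filter.Tendsto (slope (deriv g) 0) (nhdsWithin 0 {0}ᶜ) (nhds c) :=
    hasDerivAt_iff_tendsto_slope.mp hc
  have hev : ∀ᶠ t in nhdsWithin 0 {0}ᶜ, 0 < slope (deriv g) 0 t :=
    hslope.eventually (eventually_gt_nhds h)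
  have hev' : ∀ᶠ t in nhdsWithin (0:ℝ) (Set.Ioi 0), 0 < slope (deriv g) 0 t :=
    hev.filter_mono (nhdsWithin_mono 0 (fun t ht => ne_of_gt ht))
  rw [eventually_nhdsWithin_iff, Metric.eventually_nhds_iff] at hev'
  obtain ⟨ε, hε, hball⟩ := hev'
  have hpos : ∀ t ∈ Set.Ioo (0:ℝ) ε, 0 < deriv g t := by
    intro t ht
    have h1 : 0 < slope (deriv g) 0 t := by
      apply hball (by simp [abs_of_pos ht.1, ht.2] : dist t 0 < ε) ht.1
    have : slope (deriv g) 0 t = deriv g t / t := by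
      simp [slope, h0]; ring
    rw [this] at h1
    exact (div_pos_iff.mp h1).resolve_right (fun hh => absurd ht.1 (not_lt.mpr hh.2.le)) |>.1
  have hmono : StrictMonoOn g (Set.Icc 0 (ε/2)) := by
    apply strictMonoOn_of_deriv_pos (convex_Icc 0 (ε/2)) hg.continuous.continuousOn
    intro t ht
    rw [interior_Icc] at ht
    exact hpos t ⟨ht.1, ht.2.trans (by linarith)⟩
  have : g 0 < g (ε/2) :=
    hmono (Set.left_mem_Icc.mpr (by linarith)) (Set.right_mem_Icc.mpr (by linarith)) (by linarith)
  exact absurd (hmax (ε/2)) (not_le.mpr this)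

variable {E F : Type*} [NormedAddCommGroup E] [NormedSpace ℝ E]
  [NormedAddCommGroup F] [InnerProductSpace ℝ F]

lemma hasDerivAt_line (f : E → ℝ) (hf : Differentiable ℝ f) (x e : E) (t : ℝ) :
    HasDerivAt (fun s : ℝ => f (x + s • e)) (fderiv ℝ f (x + t • e) e) t := by
  have hL : HasDerivAt (fun s : ℝ => x + s • e) e t := by
    simpa using ((hasDerivAt_id t).smul_const e).const_add x
  exact (hf (x + t • e)).hasFDerivAt.comp_hasDerivAt t hL

lemma deriv_line (f : E → ℝ) (hf : Differentiable ℝ f) (x e : E) :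
    deriv (fun s : ℝ => f (x + s • e)) = fun t => fderiv ℝ f (x + t • e) e :=
  funext fun t => (hasDerivAt_line f hf x e t).deriv

/-- second directional derivative of `⟪ψ, ψ⟫`. -/
lemma D2_inner_self (ψ : E → F) (hψ : ContDiff ℝ 2 ψ) (x v : E) :
    fderiv ℝ (fun y => fderiv ℝ (fun z => ⟪ψ z, ψ z⟫) y v) x v
      = 2 * ⟪ψ x, fderiv ℝ (fun y => fderiv ℝ ψ y v) x v⟫
        + 2 * ‖fderiv ℝ ψ x v‖ ^ 2 := by
  have hψd : Differentiable ℝ ψ := hψ.differentiable two_ne_zero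
  have hG : ContDiff ℝ 1 (fun y => fderiv ℝ ψ y v) :=
    (hψ.fderiv_right (le_refl 2)).clm_apply contDiff_const
  have hGd : Differentiable ℝ (fun y => fderiv ℝ ψ y v) := hG.differentiable one_ne_zero
  have key : (fun y => fderiv ℝ (fun z => ⟪ψ z, ψ z⟫) y v)
      = fun y => ⟪ψ y, fderiv ℝ ψ y v⟫ + ⟪fderiv ℝ ψ y v, ψ y⟫ :=
    funext fun y => fderiv_inner_apply ℝ (hψd y) (hψd y) v
  rw [key]
  have hA : DifferentiableAt ℝ (fun y => ⟪ψ y, fderiv ℝ ψ y v⟫) x :=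
    (hψd x).inner ℝ (hGd x)
  have hB : DifferentiableAt ℝ (fun y => ⟪fderiv ℝ ψ y v, ψ y⟫) x :=
    (hGd x).inner ℝ (hψd x)
  rw [fderiv_fun_add hA hB]
  rw [ContinuousLinearMap.add_apply]
  rw [fderiv_inner_apply ℝ (hψd x) (hGd x) v, fderiv_inner_apply ℝ (hGd x) (hψd x) v]
  rw [real_inner_self_eq_norm_sq]
  rw [real_inner_comm (fderiv ℝ (fun y => fderiv ℝ ψ y v) x v) (ψ x)]
  ring


/-- a `ℤⁿ`-periodic `C²` solution of the Einstein–Dirac-type equation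
`−Δψ + (λ/(4(n−2)))‖ψ‖²ψ = λ²ψ` satisfies `‖ψ‖² ≤ 4(n−2)λ`. -/
theorem periodic_einstein_spinor_sup_bound
    (n m : ℕ) (hn : 3 ≤ n) (hm : 1 ≤ m) (lam : ℝ) (hlam : 0 < lam)
    (ψ : EuclideanSpace ℝ (Fin n) → EuclideanSpace ℝ (Fin m))
    (hψ : ContDiff ℝ 2 ψ)
    (hper : ∀ (x : EuclideanSpace ℝ (Fin n)) (k : Fin n → ℤ),
      ψ (x + (WithLp.equiv 2 (Fin n → ℝ)).symm (fun i => (k i : ℝ))) = ψ x)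
    (heq : ∀ x : EuclideanSpace ℝ (Fin n),
      -euclideanLaplacian ψ x + (lam / (4 * ((n : ℝ) - 2)) * ‖ψ x‖ ^ 2) • ψ x
        = (lam ^ 2) • ψ x) :
    ∀ x : EuclideanSpace ℝ (Fin n), ‖ψ x‖ ^ 2 ≤ 4 * ((n : ℝ) - 2) * lam := by
  set u : EuclideanSpace ℝ (Fin n) → ℝ := fun z => ⟪ψ z, ψ z⟫ with hudef
  have huval : ∀ x, u x = ‖ψ x‖ ^ 2 := fun x => real_inner_self_eq_norm_sq _
  have hu : ContDiff ℝ 2 u := hψ.inner ℝ hψ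
  have hud : Differentiable ℝ u := hu.differentiable two_ne_zero
  -- existence of a global maximum via periodicity
  obtain ⟨x₀, hx₀⟩ : ∃ x₀, ∀ x, u x ≤ u x₀ := by
    set K : Set (EuclideanSpace ℝ (Fin n)) :=
      (EuclideanSpace.equiv (Fin n) ℝ).symm '' (Set.univ.pi fun _ => Set.Icc (0:ℝ) 1) with hKdef
    have hKc : IsCompact K :=
      (isCompact_univ_pi fun _ => isCompact_Icc).image
        (EuclideanSpace.equiv (Fin n) ℝ).symm.continuous
    have hKne : K.Nonempty :=
      ⟨(EuclideanSpace.equiv (Fin n) ℝ).symm (fun _ => 0),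
        ⟨fun _ => 0, fun i _ => ⟨le_rfl, zero_le_one⟩, rfl⟩⟩
    obtain ⟨x₀, hx₀K, hmax⟩ := hKc.exists_isMaxOn hKne hu.continuous.continuousOn
    refine ⟨x₀, fun x => ?_⟩
    set k : Fin n → ℤ := fun i => ⌊x i⌋ with hkdef
    set v : EuclideanSpace ℝ (Fin n) :=
      (WithLp.equiv 2 (Fin n → ℝ)).symm (fun i => (k i : ℝ)) with hvdef
    have hy : x - v ∈ K := by
      refine ⟨fun i => x i - (k i : ℝ), fun i _ => ?_, ?_⟩
      · constructor
        · exact sub_nonneg.mpr (Int.floor_le _)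
        · have := Int.lt_floor_add_one (x i)
          simp only [hkdef]
          linarith
      · ext i
        simp [hvdef]
    have hxy : u x = u (x - v) := by
      have hp := hper (x - v) k
      have hxv : (x - v) + v = x := sub_add_cancel x v
      rw [hvdef] at hp
      rw [hxv] at hp
      simp only [hudef, hp, hvdef]
    rw [hxy]
    exact hmax hy
  -- second derivative test in each coordinate direction
  have hdir : ∀ w : EuclideanSpace ℝ (Fin n),
      fderiv ℝ (fun y => fderiv ℝ u y w) x₀ w ≤ 0 := by
    intro w
    have hgd : Differentiable ℝ (fun t : ℝ => u (x₀ + t • w)) :=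
      fun t => (hasDerivAt_line u hud x₀ w t).differentiableAt
    have hderiv : deriv (fun t : ℝ => u (x₀ + t • w))
        = fun t => fderiv ℝ u (x₀ + t • w) w := deriv_line u hud x₀ w
    have hH : Differentiable ℝ (fun y => fderiv ℝ u y w) :=
      ((hu.fderiv_right (m := 1) (le_refl 2)).clm_apply contDiff_const).differentiable one_ne_zero
    have hc : HasDerivAt (deriv (fun t : ℝ => u (x₀ + t • w)))
        (fderiv ℝ (fun y => fderiv ℝ u y w) x₀ w) 0 := by
      rw [hderiv]
      have h2 := hasDerivAt_line (fun y => fderiv ℝ u y w) hH x₀ w 0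
      simpa using h2
    have hmaxg : ∀ t : ℝ, u (x₀ + t • w) ≤ u (x₀ + (0:ℝ) • w) := by
      intro t
      simpa using hx₀ (x₀ + t • w)
    exact second_deriv_nonpos_of_max _ _ hgd hc (by simpa using hmaxg)
  -- the inner product with the Laplacian is nonpositive at the max
  have hsum : ⟪ψ x₀, euclideanLaplacian ψ x₀⟫ ≤ 0 := by
    have h1 : ∀ i : Fin n,
        ⟪ψ x₀, fderiv ℝ (fun y => fderiv ℝ ψ y (EuclideanSpace.single i 1)) x₀
          (EuclideanSpace.single i 1)⟫ ≤ 0 := by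
      intro i
      have h2 := hdir (EuclideanSpace.single i 1)
      rw [hudef, D2_inner_self ψ hψ x₀ (EuclideanSpace.single i 1)] at h2
      nlinarith [sq_nonneg ‖fderiv ℝ ψ x₀ (EuclideanSpace.single i 1)‖]
    rw [euclideanLaplacian, inner_sum]
    exact Finset.sum_nonpos fun i _ => h1 i
  -- use the equation
  have hL : euclideanLaplacian ψ x₀
      = (lam / (4 * ((n : ℝ) - 2)) * ‖ψ x₀‖ ^ 2) • ψ x₀ - (lam ^ 2) • ψ x₀ := by
    have h := heq x₀
    rw [← h]; abel
  have hinner : ⟪ψ x₀, euclideanLaplacian ψ x₀⟫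
      = (lam / (4 * ((n : ℝ) - 2)) * ‖ψ x₀‖ ^ 2 - lam ^ 2) * ‖ψ x₀‖ ^ 2 := by
    rw [hL, inner_sub_right, real_inner_smul_right, real_inner_smul_right,
      real_inner_self_eq_norm_sq]
    ring
  have hn2 : (0:ℝ) < (n:ℝ) - 2 := by
    have h3 : (3:ℝ) ≤ (n:ℝ) := by exact_mod_cast hn
    linarith
  have hU : ‖ψ x₀‖ ^ 2 ≤ 4 * ((n : ℝ) - 2) * lam := by
    rw [hinner] at hsum
    have hU0 : (0:ℝ) ≤ ‖ψ x₀‖ ^ 2 := sq_nonneg _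
    rcases eq_or_lt_of_le hU0 with h0 | h0
    · rw [← h0]; positivity
    · have hdiv : lam / (4 * ((n:ℝ) - 2)) * (4 * ((n:ℝ) - 2)) = lam :=
        div_mul_cancel₀ lam (by positivity)
      have hle : lam / (4 * ((n:ℝ) - 2)) * ‖ψ x₀‖ ^ 2 ≤ lam ^ 2 := by
        nlinarith [hsum, h0]
      have F := mul_le_mul_of_nonneg_right hle
        (show (0:ℝ) ≤ 4 * ((n:ℝ) - 2) by positivity)
      have key : lam * ‖ψ x₀‖ ^ 2 ≤ lam ^ 2 * (4 * ((n:ℝ) - 2)) := by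
        calc lam * ‖ψ x₀‖ ^ 2
            = lam / (4 * ((n:ℝ) - 2)) * ‖ψ x₀‖ ^ 2 * (4 * ((n:ℝ) - 2)) := by
              field_simp
          _ ≤ lam ^ 2 * (4 * ((n:ℝ) - 2)) := F
      nlinarith [key, hlam]
  intro x
  calc ‖ψ x‖ ^ 2 = u x := (huval x).symm
    _ ≤ u x₀ := hx₀ x
    _ = ‖ψ x₀‖ ^ 2 := huval x₀
    _ ≤ 4 * ((n : ℝ) - 2) * lam := hU
end

section
/- Let n ≥ 3 and m ≥ 1 be integers, λ > 0 and K ≥ 0 real numbers, and let ψ : ℝⁿ → ℝᵐ be C² on a neighborhood of a point x ∈ ℝⁿ. Assume that at x the equation −Δψ(x) + (λ/(4(n−2)))‖ψ(x)‖² ψ(x) = λ² ψ(x) holds (Δ acting componentwise), and that −Δ(‖ψ‖²)(x) ≥ −K ‖ψ(x)‖². Then Σ_{i=1}^{n} ‖∂_i ψ(x)‖² ≤ ( K/2 + λ² − (λ/(4(n−2)))‖ψ(x)‖² ) ‖ψ(x)‖². -/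
open scoped RealInnerProductSpace

lemma second_deriv_norm_sq {n m : ℕ} (ψ : EuclideanSpace ℝ (Fin n) → EuclideanSpace ℝ (Fin m))
    (x : EuclideanSpace ℝ (Fin n)) (hψ : ContDiffAt ℝ 2 ψ x) (v : EuclideanSpace ℝ (Fin n)) :
    fderiv ℝ (fun y => fderiv ℝ (fun z => ‖ψ z‖ ^ 2) y v) x v
      = 2 * ‖fderiv ℝ ψ x v‖ ^ 2
        + 2 * ⟪ψ x, fderiv ℝ (fun y => fderiv ℝ ψ y v) x v⟫ := by
  have hEv : ∀ᶠ y in nhds x, ContDiffAt ℝ 2 ψ y := hψ.eventually (by norm_num)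
  have hgd : DifferentiableAt ℝ (fun y => fderiv ℝ ψ y v) x := by
    have h1 : ContDiffAt ℝ 1 (fderiv ℝ ψ) x := hψ.fderiv_right le_rfl
    exact (h1.differentiableAt (by norm_num)).clm_apply (differentiableAt_const v)
  have hψd : DifferentiableAt ℝ ψ x := hψ.differentiableAt (by norm_num)
  have heq1 : (fun y => fderiv ℝ (fun z => ‖ψ z‖ ^ 2) y v)
      =ᶠ[nhds x] (fun y => 2 * ⟪ψ y, fderiv ℝ ψ y v⟫) := by
    filter_upwards [hEv] with y hy
    have hd : DifferentiableAt ℝ ψ y := hy.differentiableAt (by norm_num)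
    have : fderiv ℝ (fun z => ‖ψ z‖ ^ 2) y = fderiv ℝ (fun z => ⟪ψ z, ψ z⟫) y := by
      simp only [← real_inner_self_eq_norm_sq]
    rw [this, fderiv_inner_apply ℝ hd hd v, real_inner_comm (ψ y)]
    ring
  rw [heq1.fderiv_eq]
  have hdin : DifferentiableAt ℝ (fun y => ⟪ψ y, fderiv ℝ ψ y v⟫) x := hψd.inner ℝ hgd
  rw [fderiv_const_mul hdin 2]
  simp only [ContinuousLinearMap.coe_smul', Pi.smul_apply, smul_eq_mul]
  rw [fderiv_inner_apply ℝ hψd hgd v, real_inner_self_eq_norm_sq]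
  ring

/-- pointwise gradient bound for a solution of the Einstein–Dirac-type
equation under the condition `−Δ(‖ψ‖²)(x) ≥ −K‖ψ(x)‖²`:
`∑ᵢ ‖∂ᵢψ(x)‖² ≤ (K/2 + λ² − (λ/(4(n−2)))‖ψ(x)‖²)‖ψ(x)‖²`. -/
theorem gradient_bound_einstein_spinor
    (n m : ℕ) (hn : 3 ≤ n) (hm : 1 ≤ m) (lam K : ℝ) (hlam : 0 < lam) (hK : 0 ≤ K)
    (ψ : EuclideanSpace ℝ (Fin n) → EuclideanSpace ℝ (Fin m))
    (x : EuclideanSpace ℝ (Fin n)) (hψ : ContDiffAt ℝ 2 ψ x)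
    (heq : -euclideanLaplacian ψ x + (lam / (4 * ((n : ℝ) - 2)) * ‖ψ x‖ ^ 2) • ψ x
      = (lam ^ 2) • ψ x)
    (hlap : -euclideanLaplacian (fun y => ‖ψ y‖ ^ 2) x ≥ -K * ‖ψ x‖ ^ 2) :
    ∑ i : Fin n, ‖fderiv ℝ ψ x (EuclideanSpace.single i 1)‖ ^ 2
      ≤ (K / 2 + lam ^ 2 - lam / (4 * ((n : ℝ) - 2)) * ‖ψ x‖ ^ 2) * ‖ψ x‖ ^ 2 := by
  set c := lam / (4 * ((n : ℝ) - 2)) * ‖ψ x‖ ^ 2 with hc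
  set S := ∑ i : Fin n, ‖fderiv ℝ ψ x (EuclideanSpace.single i 1)‖ ^ 2 with hS
  have hL : euclideanLaplacian ψ x = (c - lam ^ 2) • ψ x := by
    have := heq
    rw [sub_smul]
    abel_nf
    abel_nf at this
    linear_combination (norm := module) -this
  have hinner : ⟪ψ x, euclideanLaplacian ψ x⟫ = (c - lam ^ 2) * ‖ψ x‖ ^ 2 := by
    rw [hL, real_inner_smul_right, real_inner_self_eq_norm_sq]
  have hlapid : euclideanLaplacian (fun y => ‖ψ y‖ ^ 2) x
      = 2 * S + 2 * ⟪ψ x, euclideanLaplacian ψ x⟫ := by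
    unfold euclideanLaplacian
    rw [Finset.sum_congr rfl (fun i _ => second_deriv_norm_sq ψ x hψ (EuclideanSpace.single i 1))]
    rw [Finset.sum_add_distrib, ← Finset.mul_sum, ← Finset.mul_sum, ← inner_sum]
  have hlap' : euclideanLaplacian (fun y => ‖ψ y‖ ^ 2) x ≤ K * ‖ψ x‖ ^ 2 := by linarith
  rw [hlapid, hinner] at hlap'
  nlinarith [hlap']
end
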